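/- For the scalar system A(n) = c·a_n·I, where a_n = e^{-n} for n even and a_n = e^{n+1} for n odd, on a nonzero Banach space, the system is strongly exponentially stable if and only if c ∈ (0, 1/e²). -/

import Mathlib

open scoped BigOperators

/-- The evolution operator `A_m^n = A(m) ∘ ⋯ ∘ A(n+1)`, with `A_n^n = 1`. -/
noncomputable def evol {X : Type*} [NormedAddCommGroup X] [NormedSpace ℝ X]
    (A : ℕ → X →L[ℝ] X) (m n : ℕ) : X →L[ℝ] X :=
  ((List.range (m - n)).map (fun k => A (n + k + 1))).foldl (fun P B => B ∘L P) 1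

noncomputable def Fbd (n : ℕ) : ℝ := if Even n then 0 else (n : ℝ) + 1

lemma smul_one_comp' {X : Type*} [NormedAddCommGroup X] [NormedSpace ℝ X] (a b : ℝ) :
    (a • (1 : X →L[ℝ] X)) ∘L (b • (1 : X →L[ℝ] X)) = (a * b) • 1 := by
  ext x; simp [smul_smul, mul_comm]

lemma foldl_scalar {X : Type*} [NormedAddCommGroup X] [NormedSpace ℝ X]
    (s : ℕ → ℝ) (n d : ℕ) :
    ((List.range d).map (fun k => s (n + k + 1) • (1 : X →L[ℝ] X))).foldl
        (fun P B => B ∘L P) (1 : X →L[ℝ] X)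
      = (∏ k ∈ Finset.range d, s (n + k + 1)) • 1 := by
  induction d with
  | zero => simp
  | succ d ih =>
    rw [List.range_succ, List.map_append, List.foldl_append, ih]
    simp only [List.map_cons, List.map_nil, List.foldl_cons, List.foldl_nil,
      Finset.prod_range_succ]
    rw [smul_one_comp', mul_comm]

lemma evol_scalar {X : Type*} [NormedAddCommGroup X] [NormedSpace ℝ X]
    (s : ℕ → ℝ) (m n : ℕ) :
    evol (fun j => s j • (1 : X →L[ℝ] X)) m n
      = (∏ k ∈ Finset.range (m - n), s (n + k + 1)) • 1 := by
  unfold evol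
  exact foldl_scalar s n (m - n)

lemma helper1 (t C : ℝ) (h : ∀ j : ℕ, t * (2 * (j : ℝ) + 1) ≤ C) : t ≤ 0 := by
  by_contra ht
  push_neg at ht
  obtain ⟨j, hj⟩ := exists_nat_gt (C / t)
  have h1 : C < (j : ℝ) * t := (div_lt_iff₀ ht).mp hj
  have h2 := h j
  nlinarith [Nat.cast_nonneg (α := ℝ) j]

lemma helper2 (t C : ℝ) (h : ∀ j : ℕ, t * (2 * (j : ℝ)) ≤ C) : t ≤ 0 := by
  by_contra ht
  push_neg at ht
  obtain ⟨j, hj⟩ := exists_nat_gt (C / t)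
  have h1 : C < (j : ℝ) * t := (div_lt_iff₀ ht).mp hj
  have h2 := h j
  nlinarith [Nat.cast_nonneg (α := ℝ) j]

noncomputable def gfn (j : ℕ) : ℝ := if Even j then -(j : ℝ) else (j : ℝ) + 1

lemma gsum (n d : ℕ) : ∑ k ∈ Finset.range d, gfn (n + k + 1) = Fbd (n + d) - Fbd n := by
  induction d with
  | zero => simp
  | succ d ih =>
    rw [Finset.sum_range_succ, ih]
    have key : gfn (n + d + 1) = Fbd (n + d + 1) - Fbd (n + d) := by
      rcases Nat.even_or_odd (n + d) with h | h
      · have h1 : ¬ Even (n + d + 1) := by simp [Nat.even_add_one, h]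
        simp only [gfn, Fbd, if_pos h, if_neg h1]
        ring
      · have h2 : ¬ Even (n + d) := Nat.not_even_iff_odd.mpr h
        have h1 : Even (n + d + 1) := by
          rw [Nat.even_add_one]; exact h2
        simp only [gfn, Fbd, if_pos h1, if_neg h2]
        push_cast; ring
    rw [key]; ring

lemma prodF (c : ℝ) (n d : ℕ) :
    ∏ k ∈ Finset.range d, (c * Real.exp (gfn (n + k + 1)))
      = c ^ d * Real.exp (Fbd (n + d) - Fbd n) := by
  rw [Finset.prod_mul_distrib, Finset.prod_const, ← Real.exp_sum, gsum, Finset.card_range]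

theorem stmt19 {X : Type*} [NormedAddCommGroup X] [NormedSpace ℝ X] [CompleteSpace X]
    [Nontrivial X] (c : ℝ) (hc : 0 < c)
    (A : ℕ → X →L[ℝ] X)
    (hA : A = fun n : ℕ =>
      (c * (if Even n then Real.exp (-(n : ℝ)) else Real.exp ((n : ℝ) + 1))) • (1 : X →L[ℝ] X)) :
    (∃ N α β : ℝ, 1 ≤ N ∧ 0 < α ∧ 0 ≤ β ∧ β < α ∧
      ∀ n m : ℕ, n ≤ m → ∀ x : X,
        ‖evol A m n x‖ ≤ N * Real.exp (-α * ((m : ℝ) - n)) * Real.exp (β * n) * ‖x‖) ↔ c ∈ Set.Ioo (0 : ℝ) (1 / Real.exp 2) := by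
  have hA' : A = fun j : ℕ => (c * Real.exp (gfn j)) • (1 : X →L[ℝ] X) := by
    rw [hA]; funext j; by_cases h : Even j <;> simp [gfn, h]
  have hev : ∀ (n d : ℕ) (x : X),
      ‖evol A (n + d) n x‖ = (c ^ d * Real.exp (Fbd (n + d) - Fbd n)) * ‖x‖ := by
    intro n d x
    rw [hA', evol_scalar]
    have hnd : n + d - n = d := by omega
    rw [hnd, prodF c n d]
    rw [ContinuousLinearMap.smul_apply, norm_smul, ContinuousLinearMap.one_apply,
      Real.norm_eq_abs, abs_of_pos (by positivity)]
  constructor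
  · rintro ⟨N, α, β, hN, hα, hβ0, hβα, h⟩
    obtain ⟨x₀, hx₀⟩ := exists_ne (0 : X)
    have hx : 0 < ‖x₀‖ := norm_pos_iff.mpr hx₀
    have hN0 : (0 : ℝ) < N := by linarith
    have key : ∀ n d : ℕ, c ^ d * Real.exp (Fbd (n + d) - Fbd n)
        ≤ N * Real.exp (-α * d) * Real.exp (β * n) := by
      intro n d
      have h1 := h n (n + d) (Nat.le_add_right _ _) x₀
      rw [hev n d x₀] at h1
      have hcast : -α * (((n + d : ℕ) : ℝ) - (n : ℝ)) = -α * d := by push_cast; ring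
      rw [hcast] at h1
      exact (mul_le_mul_iff_left₀ hx).mp h1
    have key' : ∀ n d : ℕ, (d : ℝ) * Real.log c + (Fbd (n + d) - Fbd n)
        ≤ Real.log N + (-α * d) + β * n := by
      intro n d
      have h1 := Real.log_le_log (by positivity) (key n d)
      rwa [Real.log_mul (by positivity) (Real.exp_ne_zero _), Real.log_pow,
        Real.log_mul (by positivity) (Real.exp_ne_zero _),
        Real.log_mul (by positivity) (Real.exp_ne_zero _),
        Real.log_exp, Real.log_exp, Real.log_exp] at h1
    have ha : Real.log c + 1 + α ≤ 0 := by
      apply helper1 _ (Real.log N - 1)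
      intro j
      have h1 := key' 0 (2 * j + 1)
      have hodd : ¬ Even (0 + (2 * j + 1)) := by
        simp [Nat.even_add_one, Nat.even_add, parity_simps]
      have hF0 : Fbd 0 = 0 := by simp [Fbd]
      have hF1 : Fbd (0 + (2 * j + 1)) = ((0 + (2 * j + 1) : ℕ) : ℝ) + 1 := by
        simp only [Fbd, if_neg hodd]
      rw [hF0, hF1] at h1
      push_cast at h1 ⊢
      nlinarith [h1]
    have hb : (1 : ℝ) - β ≤ 0 := by
      apply helper2 _ (Real.log N - α - 2 - Real.log c)
      intro j
      have h1 := key' (2 * j) 1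
      have heven : Even (2 * j) := even_two_mul j
      have hodd : ¬ Even (2 * j + 1) := by simp [Nat.even_add_one, heven]
      have hF0 : Fbd (2 * j) = 0 := by simp [Fbd, heven]
      have hF1 : Fbd (2 * j + 1) = ((2 * j + 1 : ℕ) : ℝ) + 1 := by
        simp only [Fbd, if_neg hodd]
      rw [hF0, hF1] at h1
      push_cast at h1 ⊢
      nlinarith [h1]
    have hclog : Real.log c < -2 := by linarith
    refine ⟨hc, ?_⟩
    have h2 : c < Real.exp (-2) := by
      calc c = Real.exp (Real.log c) := (Real.exp_log hc).symm
        _ < Real.exp (-2) := Real.exp_lt_exp.mpr hclog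
    rw [one_div, ← Real.exp_neg]
    exact h2
  · rintro ⟨hc0, hc2⟩
    have hlog : Real.log c < -2 := by
      have h1 := Real.log_lt_log hc hc2
      rwa [one_div, ← Real.exp_neg, Real.log_exp] at h1
    refine ⟨Real.exp 1, -Real.log c - 1, 1, ?_, by linarith, by norm_num, by linarith, ?_⟩
    · exact Real.one_le_exp (by norm_num)
    intro n m hnm x
    obtain ⟨d, rfl⟩ : ∃ d, m = n + d := ⟨m - n, by omega⟩
    rw [hev n d x]
    have hcast : ((n + d : ℕ) : ℝ) - (n : ℝ) = d := by push_cast; ring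
    rw [hcast]
    have hFm : Fbd (n + d) ≤ ((n + d : ℕ) : ℝ) + 1 := by
      unfold Fbd; split
      · positivity
      · exact le_rfl
    have hFn : 0 ≤ Fbd n := by
      unfold Fbd; split
      · exact le_rfl
      · positivity
    have hcd : c ^ d = Real.exp ((d : ℝ) * Real.log c) := by
      rw [Real.exp_nat_mul, Real.exp_log hc]
    rw [hcd, ← Real.exp_add, ← Real.exp_add, ← Real.exp_add]
    apply mul_le_mul_of_nonneg_right _ (norm_nonneg x)
    apply Real.exp_le_exp.mpr
    push_cast
    nlinarith [hFm, hFn]
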